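/- arXiv:math/0412058 — 8 statements merged into one kernel-verified Lean document; each statement's English description precedes it below -/
import Mathlib

section
/- Let (Ω, η, ξ) be a projective triple of rational 1-forms on ℂ² and let g, h ∈ K with g ≠ 0. Then the modified triple Ω' = g·Ω, η' = η + dg/g + h·Ω (componentwise η' = η + ((∂x g)/g, (∂y g)/g) + h·Ω), ξ' = (1/g)·(ξ − dh − h·η − (h²/2)·Ω) is again a projective triple. -/
open MvPolynomial

noncomputable section

/-- The field of rational functions `ℂ(x,y)`. -/
abbrev RatF : Type := FractionRing (MvPolynomial (Fin 2) ℂ)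


set_option maxHeartbeats 1000000
set_option synthInstance.maxHeartbeats 400000

lemma pderiv_comm' (p : MvPolynomial (Fin 2) ℂ) :
    pderiv 0 (pderiv 1 p) = pderiv 1 (pderiv 0 p) := by
  have h : (⁅pderiv (0 : Fin 2) (R := ℂ), pderiv (1 : Fin 2) (R := ℂ)⁆ :
      Derivation ℂ (MvPolynomial (Fin 2) ℂ) (MvPolynomial (Fin 2) ℂ)) = 0 := by
    apply derivation_ext
    intro i
    fin_cases i <;>
      simp [Derivation.commutator_apply, pderiv_X_self, pderiv_X_of_ne]
  have h2 : (⁅pderiv (0 : Fin 2) (R := ℂ), pderiv (1 : Fin 2) (R := ℂ)⁆ :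
      Derivation ℂ (MvPolynomial (Fin 2) ℂ) (MvPolynomial (Fin 2) ℂ)) p = 0 := by rw [h]; rfl
  rw [Derivation.commutator_apply, sub_eq_zero] at h2
  exact h2

lemma deriv_zero_of_poly (D : Derivation ℂ RatF RatF)
    (h : ∀ p : MvPolynomial (Fin 2) ℂ, D (algebraMap (MvPolynomial (Fin 2) ℂ) RatF p) = 0)
    (z : RatF) : D z = 0 := by
  obtain ⟨⟨p, q⟩, hz⟩ := IsLocalization.surj (nonZeroDivisors (MvPolynomial (Fin 2) ℂ)) z
  have hq0 : (algebraMap (MvPolynomial (Fin 2) ℂ) RatF q) ≠ 0 :=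
    IsFractionRing.to_map_ne_zero_of_mem_nonZeroDivisors q.2
  have h2 := congrArg D hz
  rw [D.leibniz, h, h, smul_zero, zero_add, smul_eq_mul] at h2
  exact (mul_eq_zero.mp h2).resolve_left hq0

/-- Wedge product of two rational 1-forms: `ω ∧ θ = ω₁ θ₂ - ω₂ θ₁`. -/
def wedge (ω θ : RatF × RatF) : RatF := ω.1 * θ.2 - ω.2 * θ.1

/-- Exterior derivative of a rational 1-form: `dω = ∂x ω₂ - ∂y ω₁`. -/
def extd (dx dy : Derivation ℂ RatF RatF) (ω : RatF × RatF) : RatF := dx ω.2 - dy ω.1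

/-- Differential of a rational function: `dF = (∂x F, ∂y F)`. -/
def d0 (dx dy : Derivation ℂ RatF RatF) (F : RatF) : RatF × RatF := (dx F, dy F)

/-- The derivations `dx`, `dy` extend the partial derivatives on `ℂ[x,y]`. -/
def ExtendsPartials (dx dy : Derivation ℂ RatF RatF) : Prop :=
  (∀ p : MvPolynomial (Fin 2) ℂ,
      dx (algebraMap (MvPolynomial (Fin 2) ℂ) RatF p)
        = algebraMap (MvPolynomial (Fin 2) ℂ) RatF (pderiv 0 p)) ∧
  (∀ p : MvPolynomial (Fin 2) ℂ,
      dy (algebraMap (MvPolynomial (Fin 2) ℂ) RatF p)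
        = algebraMap (MvPolynomial (Fin 2) ℂ) RatF (pderiv 1 p))

/-- `(Ω, η, ξ)` is a projective triple: (Proj.1) `dΩ = η∧Ω`, (Proj.2) `dη = Ω∧ξ`,
(Proj.3) `dξ = ξ∧η`. -/
def IsProjTriple (dx dy : Derivation ℂ RatF RatF) (Ω η ξ : RatF × RatF) : Prop :=
  extd dx dy Ω = wedge η Ω ∧ extd dx dy η = wedge Ω ξ ∧ extd dx dy ξ = wedge ξ η


lemma comm_ratf (dx dy : Derivation ℂ RatF RatF) (hext : ExtendsPartials dx dy) (f : RatF) :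
    dx (dy f) = dy (dx f) := by
  have hz := deriv_zero_of_poly ⁅dx, dy⁆ (fun p => by
    rw [Derivation.commutator_apply, hext.2 p, hext.1 p, hext.1, hext.2, ← map_sub,
      pderiv_comm', sub_self, map_zero]) f
  rw [Derivation.commutator_apply, sub_eq_zero] at hz
  exact hz

/-- Modification of a projective triple: for `g ≠ 0` and `h`, the triple
`Ω' = g Ω`, `η' = η + dg/g + h Ω`, `ξ' = (1/g)(ξ - dh - h η - (h²/2) Ω)`
is again a projective triple. -/
theorem projTriple_modification (dx dy : Derivation ℂ RatF RatF)
    (hext : ExtendsPartials dx dy) (Ω η ξ : RatF × RatF)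
    (h : IsProjTriple dx dy Ω η ξ) (g h' : RatF) (hg : g ≠ 0) :
    IsProjTriple dx dy (g • Ω) (η + (dx g / g, dy g / g) + h' • Ω)
      (g⁻¹ • (ξ - d0 dx dy h' - h' • η - (h' ^ 2 / 2) • Ω)) := by
  obtain ⟨h1, h2, h3⟩ := h
  have comm := comm_ratf dx dy hext
  simp only [extd, wedge] at h1 h2 h3
  have hdx2 : dx (2 : RatF) = 0 := by
    rw [show (2 : RatF) = 1 + 1 by norm_num, map_add, Derivation.map_one_eq_zero, add_zero]
  have hdy2 : dy (2 : RatF) = 0 := by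
    rw [show (2 : RatF) = 1 + 1 by norm_num, map_add, Derivation.map_one_eq_zero, add_zero]
  have hdx2 : dx (2 : RatF) = 0 := by
    rw [show (2 : RatF) = 1 + 1 by norm_num, map_add, Derivation.map_one_eq_zero, add_zero]
  have hdy2 : dy (2 : RatF) = 0 := by
    rw [show (2 : RatF) = 1 + 1 by norm_num, map_add, Derivation.map_one_eq_zero, add_zero]
  have hinx : dx g⁻¹ = -(dx g) / g ^ 2 := by
    rw [Derivation.leibniz_inv, smul_eq_mul, inv_pow]; ring
  have hiny : dy g⁻¹ = -(dy g) / g ^ 2 := by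
    rw [Derivation.leibniz_inv, smul_eq_mul, inv_pow]; ring
  have e1 : dx Ω.2 = η.1 * Ω.2 - η.2 * Ω.1 + dy Ω.1 := by linear_combination h1
  have e2 : dx η.2 = Ω.1 * ξ.2 - Ω.2 * ξ.1 + dy η.1 := by linear_combination h2
  have e3 : dx ξ.2 = ξ.1 * η.2 - ξ.2 * η.1 + dy ξ.1 := by linear_combination h3
  refine ⟨?_, ?_, ?_⟩ <;>
    simp only [extd, wedge, d0, Prod.fst_add, Prod.snd_add, Prod.smul_fst, Prod.smul_snd,
      Prod.fst_sub, Prod.snd_sub, smul_eq_mul, map_add, map_sub, Derivation.leibniz,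
      Derivation.leibniz_div, Derivation.leibniz_pow, hinx, hiny,
      Derivation.map_natCast, nsmul_eq_mul, hdx2, hdy2, comm g, comm h', e1, e2, e3,
      inv_pow]
  · field_simp
    ring
  · field_simp
    ring
  · push_cast
    rw [inv_eq_one_div g]
    field_simp
    ring
end
end

section
/- Let (Ω, η, ξ) and (Ω, η, ξ') be two projective triples of rational 1-forms on ℂ² with the same first two entries, where Ω ≠ (0,0). Then there exists F ∈ K such that ξ' = ξ + F·Ω and F·dΩ = −(1/2)·(dF ∧ Ω). -/
open MvPolynomial

noncomputable section

/-- Two projective triples sharing the first two entries differ by `F Ω` with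
`F dΩ = -(1/2) dF ∧ Ω`. -/
theorem projTriple_same_first_two (dx dy : Derivation ℂ RatF RatF)
    (hext : ExtendsPartials dx dy) (Ω η ξ ξ' : RatF × RatF) (hΩ : Ω ≠ 0)
    (h : IsProjTriple dx dy Ω η ξ) (h' : IsProjTriple dx dy Ω η ξ') :
    ∃ F : RatF, ξ' = ξ + F • Ω ∧
      F * extd dx dy Ω = -(1 / 2) * wedge (d0 dx dy F) Ω := by
  obtain ⟨h1, h2, h3⟩ := h
  obtain ⟨h1', h2', h3'⟩ := h'
  -- wedge Ω ξ = wedge Ω ξ'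
  have hw : wedge Ω ξ = wedge Ω ξ' := by rw [← h2, ← h2']
  -- find F with ξ' - ξ = F • Ω
  have hprop : ∃ F : RatF, ξ' = ξ + F • Ω := by
    have hw' : Ω.1 * (ξ'.2 - ξ.2) - Ω.2 * (ξ'.1 - ξ.1) = 0 := by
      simp only [wedge] at hw; ring_nf; ring_nf at hw; linear_combination -hw
    by_cases ha : Ω.1 = 0
    · have hb : Ω.2 ≠ 0 := by
        intro hb; exact hΩ (Prod.ext ha hb)
      refine ⟨(ξ'.2 - ξ.2) / Ω.2, ?_⟩
      have h1 : ξ'.1 - ξ.1 = 0 := by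
        have : Ω.2 * (ξ'.1 - ξ.1) = 0 := by linear_combination -hw' + (ξ'.2 - ξ.2) * ha
        rcases mul_eq_zero.mp this with hc | hc
        · exact absurd hc hb
        · exact hc
      refine Prod.ext ?_ ?_
      · simp only [Prod.fst_add, Prod.smul_fst, smul_eq_mul, ha, mul_zero, add_zero]
        linear_combination h1
      · simp only [Prod.snd_add, Prod.smul_snd, smul_eq_mul]
        rw [div_mul_cancel₀ _ hb]; ring
    · refine ⟨(ξ'.1 - ξ.1) / Ω.1, ?_⟩
      refine Prod.ext ?_ ?_
      · simp only [Prod.fst_add, Prod.smul_fst, smul_eq_mul]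
        rw [div_mul_cancel₀ _ ha]; ring
      · simp only [Prod.snd_add, Prod.smul_snd, smul_eq_mul]
        rw [div_mul_eq_mul_div, eq_comm, add_comm, ← eq_sub_iff_add_eq, div_eq_iff ha]
        linear_combination -hw'
  obtain ⟨F, hF⟩ := hprop
  refine ⟨F, hF, ?_⟩
  -- compute extd of ξ' = ξ + F • Ω
  have hξ'1 : ξ'.1 = ξ.1 + F * Ω.1 := by rw [hF]; simp
  have hξ'2 : ξ'.2 = ξ.2 + F * Ω.2 := by rw [hF]; simp
  have key : extd dx dy ξ' - extd dx dy ξ = wedge ξ' η - wedge ξ η := by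
    rw [h3, h3']
  simp only [extd, wedge, hξ'1, hξ'2, map_add, Derivation.leibniz, smul_eq_mul] at key
  have h1e := h1
  simp only [extd, wedge] at h1e
  simp only [extd, wedge, d0]
  linear_combination (1/2 : RatF) * key + (F/2) * h1e
end
end

section
/- Let a, b, c, p ∈ ℂ[x] be polynomials in the first variable only, viewed in K = ℂ(x,y), with p ≠ 0, and write p' = ∂x p. Consider the Riccati 1-form Ω := (−(y²·c − y·b − a), p), i.e. Ω = p dy − (y²c − yb − a)dx, and the 1-forms η := ((p'+b)/p + 2a/(y·p), 2/y) and ξ := (−2a/(y²·p²), 0). Then (Ω, η, ξ) is a projective triple. -/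
open MvPolynomial

noncomputable section

/-- The image in `K = ℂ(x,y)` of a polynomial in the first variable only. -/
def ofPolyX (q : Polynomial ℂ) : RatF :=
  algebraMap (MvPolynomial (Fin 2) ℂ) RatF (Polynomial.aeval (X 0 : MvPolynomial (Fin 2) ℂ) q)

/-- The image of the variable `y` in `K = ℂ(x,y)`. -/
def yK : RatF := algebraMap (MvPolynomial (Fin 2) ℂ) RatF (X 1)

lemma pd0 (q : Polynomial ℂ) :
    pderiv (R := ℂ) 0 (Polynomial.aeval (X 0 : MvPolynomial (Fin 2) ℂ) q)
      = Polynomial.aeval (X 0 : MvPolynomial (Fin 2) ℂ) (Polynomial.derivative q) := by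
  rw [Derivation.map_aeval]
  simp [pderiv_X_self]

lemma pd1 (q : Polynomial ℂ) :
    pderiv (R := ℂ) 1 (Polynomial.aeval (X 0 : MvPolynomial (Fin 2) ℂ) q) = 0 := by
  rw [Derivation.map_aeval]
  simp [pderiv_X_of_ne]

lemma aevalX0_inj (q : Polynomial ℂ) (h : Polynomial.aeval (X 0 : MvPolynomial (Fin 2) ℂ) q = 0) :
    q = 0 := by
  have := congrArg (MvPolynomial.aeval (R := ℂ) ![(Polynomial.X : Polynomial ℂ), 0]) h
  rw [← Polynomial.aeval_algHom_apply, map_zero, aeval_X, Matrix.cons_val_zero,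
    Polynomial.aeval_X_left_apply] at this
  exact this

lemma ofPolyX_ne_zero {q : Polynomial ℂ} (hq : q ≠ 0) : ofPolyX q ≠ 0 := by
  intro h
  apply hq
  apply aevalX0_inj
  exact (map_eq_zero_iff _ (IsFractionRing.injective (MvPolynomial (Fin 2) ℂ) RatF)).mp h

lemma yK_ne_zero : yK ≠ 0 := by
  intro h
  have := (map_eq_zero_iff _ (IsFractionRing.injective (MvPolynomial (Fin 2) ℂ) RatF)).mp h
  exact X_ne_zero _ this

set_option maxHeartbeats 2000000 in
set_option synthInstance.maxHeartbeats 400000 in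
/-- The Riccati 1-form `Ω = p dy - (y²c - yb - a) dx` together with
`η = ((p'+b)/p + 2a/(yp)) dx + (2/y) dy` and `ξ = (-2a/(y²p²)) dx` is a projective triple. -/
theorem riccati_projTriple (dx dy : Derivation ℂ RatF RatF)
    (hext : ExtendsPartials dx dy) (a b c p : Polynomial ℂ) (hp : p ≠ 0) :
    letI A : RatF := ofPolyX a
    letI B : RatF := ofPolyX b
    letI C : RatF := ofPolyX c
    letI P : RatF := ofPolyX p
    letI Ω : RatF × RatF := (-(yK ^ 2 * C - yK * B - A), P)
    letI η : RatF × RatF := ((dx P + B) / P + 2 * A / (yK * P), 2 / yK)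
    letI ξ : RatF × RatF := (-(2 * A) / (yK ^ 2 * P ^ 2), 0)
    IsProjTriple dx dy Ω η ξ := by
  obtain ⟨hdx, hdy⟩ := hext
  have hXq : ∀ q : Polynomial ℂ, dx (ofPolyX q) = ofPolyX (Polynomial.derivative q) := by
    intro q; rw [ofPolyX, hdx, pd0]; rfl
  have hYq : ∀ q : Polynomial ℂ, dy (ofPolyX q) = 0 := by
    intro q; rw [ofPolyX, hdy, pd1, map_zero]
  have hXy : dx yK = 0 := by
    rw [yK, hdx]
    have : pderiv (R := ℂ) (0 : Fin 2) (X (1 : Fin 2)) = 0 := pderiv_X_of_ne (by decide)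
    rw [this, map_zero]
  have hYy : dy yK = 1 := by
    rw [yK, hdy, pderiv_X_self, map_one]
  have h2x : dx (2 : RatF) = 0 := by simpa using dx.map_natCast 2
  have h2y : dy (2 : RatF) = 0 := by simpa using dy.map_natCast 2
  have hP : ofPolyX p ≠ 0 := ofPolyX_ne_zero hp
  have hy : yK ≠ 0 := yK_ne_zero
  show IsProjTriple dx dy (-(yK ^ 2 * ofPolyX c - yK * ofPolyX b - ofPolyX a), ofPolyX p)
      ((dx (ofPolyX p) + ofPolyX b) / ofPolyX p + 2 * ofPolyX a / (yK * ofPolyX p), 2 / yK)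
      (-(2 * ofPolyX a) / (yK ^ 2 * ofPolyX p ^ 2), 0)
  refine ⟨?_, ?_, ?_⟩ <;>
  · simp only [extd, wedge, hXq, hYq, hXy, hYy, h2x, h2y, map_add, map_sub, map_neg, map_zero,
      Derivation.leibniz, Derivation.leibniz_div, Derivation.leibniz_pow, smul_eq_mul]
    field_simp
    ring
end
end

section
/- Let a, b, c, p ∈ ℂ[x] be polynomials in the first variable only, viewed in K = ℂ(x,y), with p ≠ 0, and write p' = ∂x p. Consider the Riccati 1-form Ω := (−(y²·c − y·b − a), p), i.e. Ω = p dy − (y²c − yb − a)dx, and the 1-forms η' := ((p' − b + 2y·c)/p, 0) and ξ' := (2c/p², 0). Then (Ω, η', ξ') is a projective triple. -/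
open MvPolynomial

noncomputable section

section AuxAlgebra

variable {K : Type*} [Field K] [Algebra ℂ K]

lemma riccati_key1 (dy : Derivation ℂ K K) (A B C P Y : K) (hP : P ≠ 0)
    (hA : dy A = 0) (hB : dy B = 0) (hC : dy C = 0) (hY : dy Y = 1) (DP W : K) :
    DP - dy (-(Y ^ 2 * C - Y * B - A)) = (DP - B + 2 * Y * C) / P * P - 0 * W := by
  rw [map_neg, map_sub, map_sub, Derivation.leibniz, Derivation.leibniz, Derivation.leibniz_pow,
    hA, hB, hC, hY]
  simp only [smul_eq_mul]
  field_simp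
  ring

lemma riccati_key2 (dy : Derivation ℂ K K) (B C P P' Y W : K) (hP : P ≠ 0)
    (hB : dy B = 0) (hC : dy C = 0) (hP0 : dy P = 0) (hP' : dy P' = 0) (hY : dy Y = 1) :
    (0:K) - dy ((P' - B + 2 * Y * C) / P) = W * 0 - P * (2 * C / P ^ 2) := by
  rw [Derivation.leibniz_div, map_add, map_sub, hP', hB, hP0, Derivation.leibniz,
    Derivation.leibniz, hC, hY]
  have h2 : dy (2:K) = 0 := by rw [show (2:K) = ((2:ℕ):K) by norm_num]; exact dy.map_natCast 2
  simp only [smul_eq_mul, h2]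
  field_simp
  ring

lemma riccati_key3 (dy : Derivation ℂ K K) (C P V W : K)
    (hC : dy C = 0) (hP0 : dy P = 0) :
    (0:K) - dy (2 * C / P ^ 2) = V * 0 - 0 * W := by
  rw [Derivation.leibniz_div, Derivation.leibniz, Derivation.leibniz_pow, hC, hP0]
  have h2 : dy (2:K) = 0 := by rw [show (2:K) = ((2:ℕ):K) by norm_num]; exact dy.map_natCast 2
  simp [h2]

end AuxAlgebra

lemma dx_ofPolyX {dx dy : Derivation ℂ RatF RatF} (h : ExtendsPartials dx dy)
    (q : Polynomial ℂ) : dx (ofPolyX q) = ofPolyX q.derivative := by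
  rw [ofPolyX, h.1, Derivation.map_aeval]
  simp [ofPolyX, pderiv_X]

lemma dy_ofPolyX {dx dy : Derivation ℂ RatF RatF} (h : ExtendsPartials dx dy)
    (q : Polynomial ℂ) : dy (ofPolyX q) = 0 := by
  rw [ofPolyX, h.2, Derivation.map_aeval]
  simp [pderiv_X]

lemma dy_yK {dx dy : Derivation ℂ RatF RatF} (h : ExtendsPartials dx dy) : dy yK = 1 := by
  rw [yK, h.2]; simp [pderiv_X]

/-- The Riccati 1-form `Ω = p dy - (y²c - yb - a) dx` together with
`η' = ((p' - b + 2yc)/p) dx` and `ξ' = (2c/p²) dx` is a projective triple. -/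
theorem riccati_projTriple' (dx dy : Derivation ℂ RatF RatF)
    (hext : ExtendsPartials dx dy) (a b c p : Polynomial ℂ) (hp : p ≠ 0) :
    letI A : RatF := ofPolyX a
    letI B : RatF := ofPolyX b
    letI C : RatF := ofPolyX c
    letI P : RatF := ofPolyX p
    letI Ω : RatF × RatF := (-(yK ^ 2 * C - yK * B - A), P)
    letI η' : RatF × RatF := ((dx P - B + 2 * yK * C) / P, 0)
    letI ξ' : RatF × RatF := (2 * C / P ^ 2, 0)
    IsProjTriple dx dy Ω η' ξ' := by
  have hP : ofPolyX p ≠ 0 := ofPolyX_ne_zero hp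
  have hdxP := dx_ofPolyX hext p
  simp only [IsProjTriple, extd, wedge, map_zero]
  refine ⟨?_, ?_, ?_⟩
  · exact riccati_key1 dy (ofPolyX a) (ofPolyX b) (ofPolyX c) (ofPolyX p) yK hP
      (dy_ofPolyX hext a) (dy_ofPolyX hext b) (dy_ofPolyX hext c) (dy_yK (dx := dx) hext)
      (dx (ofPolyX p)) _
  · rw [hdxP]
    exact riccati_key2 dy (ofPolyX b) (ofPolyX c) (ofPolyX p) (ofPolyX p.derivative) yK _ hP
      (dy_ofPolyX hext b) (dy_ofPolyX hext c) (dy_ofPolyX hext p)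
      (dy_ofPolyX hext p.derivative) (dy_yK (dx := dx) hext)
  · exact riccati_key3 dy (ofPolyX c) (ofPolyX p) _ _
      (dy_ofPolyX hext c) (dy_ofPolyX hext p)
end
end

section
/- Let a, b, p ∈ ℂ[x] be polynomials in the first variable only, viewed in K = ℂ(x,y), with p ≠ 0, and write p' = ∂x p. The rational 1-form η := ((p'+b)/p + 2a/(y·p), 2/y) is closed (i.e. dη = 0) if and only if a = 0. -/
open MvPolynomial

noncomputable section

lemma pderiv1_aevalX0 (q : Polynomial ℂ) :
    pderiv 1 (Polynomial.aeval (X 0 : MvPolynomial (Fin 2) ℂ) q) = 0 := by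
  induction q using Polynomial.induction_on with
  | C c => simp
  | add p q hp hq => simp [hp, hq]
  | monomial n c ih =>
      simp [pderiv_mul, pderiv_pow, pderiv_X_of_ne (show (0:Fin 2) ≠ 1 by decide)]

lemma pderiv0_aevalX0 (q : Polynomial ℂ) :
    pderiv 0 (Polynomial.aeval (X 0 : MvPolynomial (Fin 2) ℂ) q)
      = Polynomial.aeval (X 0 : MvPolynomial (Fin 2) ℂ) (Polynomial.derivative q) := by
  induction q using Polynomial.induction_on with
  | C c => simp
  | add p q hp hq => simp [hp, hq]
  | monomial n c ih =>
      simp [pderiv_C_mul, pderiv_pow, pderiv_X_self]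

lemma aevalX0_key (q : Polynomial ℂ) :
    (MvPolynomial.aeval (fun _ : Fin 2 => (Polynomial.X : Polynomial ℂ)))
      (Polynomial.aeval (X 0 : MvPolynomial (Fin 2) ℂ) q) = q := by
  rw [← Polynomial.aeval_algHom_apply]
  simp

lemma ofPolyX_eq_zero_iff (q : Polynomial ℂ) : ofPolyX q = 0 ↔ q = 0 := by
  constructor
  · intro h
    have h2 : Polynomial.aeval (X 0 : MvPolynomial (Fin 2) ℂ) q = 0 :=
      IsFractionRing.injective (MvPolynomial (Fin 2) ℂ) RatF (by simpa [ofPolyX] using h)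
    have := congrArg (MvPolynomial.aeval (fun _ : Fin 2 => (Polynomial.X : Polynomial ℂ))) h2
    rwa [aevalX0_key, map_zero] at this
  · rintro rfl; simp [ofPolyX]

set_option maxHeartbeats 1000000 in
/-- The 1-form `η = ((p'+b)/p + 2a/(yp)) dx + (2/y) dy` is closed iff `a = 0`. -/
theorem riccati_eta_closed_iff (dx dy : Derivation ℂ RatF RatF)
    (hext : ExtendsPartials dx dy) (a b p : Polynomial ℂ) (hp : p ≠ 0) :
    letI A : RatF := ofPolyX a
    letI B : RatF := ofPolyX b
    letI P : RatF := ofPolyX p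
    letI η : RatF × RatF := ((dx P + B) / P + 2 * A / (yK * P), 2 / yK)
    (extd dx dy η = 0 ↔ a = 0) := by
  obtain ⟨hdx, hdy⟩ := hext
  set A : RatF := ofPolyX a with hA
  set B : RatF := ofPolyX b with hB
  set P : RatF := ofPolyX p with hP
  have dyQ : ∀ q : Polynomial ℂ, dy (ofPolyX q) = 0 := fun q => by
    rw [ofPolyX, hdy, pderiv1_aevalX0, map_zero]
  have dxQ : ∀ q : Polynomial ℂ, dx (ofPolyX q) = ofPolyX (Polynomial.derivative q) :=
    fun q => by rw [ofPolyX, hdx, pderiv0_aevalX0]; rfl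
  have hyx : dx yK = 0 := by
    rw [yK, hdx, pderiv_X_of_ne (show (1:Fin 2) ≠ 0 by decide), map_zero]
  have hyy : dy yK = 1 := by
    rw [yK, hdy, pderiv_X_self, map_one]
  have hy0 : yK ≠ 0 := by
    rw [yK]
    simpa using (map_ne_zero_iff _ (IsFractionRing.injective (MvPolynomial (Fin 2) ℂ) RatF)).mpr
      (X_ne_zero (1 : Fin 2))
  have hP0 : P ≠ 0 := by rw [hP, Ne, ofPolyX_eq_zero_iff]; exact hp
  have dx2 : dx (2 : RatF) = 0 := by rw [show (2:RatF) = 1 + 1 by norm_num]; simp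
  have dy2 : dy (2 : RatF) = 0 := by rw [show (2:RatF) = 1 + 1 by norm_num]; simp
  have key : extd dx dy ((dx P + B) / P + 2 * A / (yK * P), 2 / yK)
      = 2 * A * P / (yK * P) ^ 2 := by
    simp only [extd]
    rw [map_add, Derivation.leibniz_div, Derivation.leibniz_div, Derivation.leibniz_div,
      Derivation.leibniz, Derivation.leibniz, map_add, hP, dxQ]
    simp only [← hP, dyQ, hyx, hyy, dx2, dy2, smul_eq_mul]
    field_simp
    rw [show dy A = 0 from dyQ a, show dy B = 0 from dyQ b, show dy P = 0 from dyQ p]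
    ring
  refine key ▸ ?_
  rw [div_eq_zero_iff]
  have hd : (yK * P) ^ 2 ≠ 0 := pow_ne_zero _ (mul_ne_zero hy0 hP0)
  simp only [hd, or_false]
  constructor
  · intro h
    have : A = 0 := by
      rcases mul_eq_zero.mp h with h' | h'
      · rcases mul_eq_zero.mp h' with h'' | h''
        · exact absurd h'' two_ne_zero
        · exact h''
      · exact absurd h' hP0
    rwa [hA, ofPolyX_eq_zero_iff] at this
  · intro h
    rw [hA, h]
    simp [ofPolyX]
end
end

section
/- Let s : ℂ → ℂ be meromorphic at 0. Then the following are equivalent: (i) there exists a function r : ℂ → ℂ analytic at 0 with r(0) ≠ 0 such that deriv r z = s z · r z for all z ≠ 0 in some neighborhood of 0; (ii) the order of s at 0 is nonnegative (i.e. s agrees, on a punctured neighborhood of 0, with a function analytic at 0). In other words, the differential equation r'/r = s has a holomorphic non-vanishing solution near 0 exactly when s has no pole at 0. -/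
open Filter

open scoped Topology

/-- Two functions meromorphic at a point that agree on a punctured neighborhood have the
same order. -/
lemma riccati_aux_order_congr {f g : ℂ → ℂ} {x : ℂ} (hf : MeromorphicAt f x)
    (hg : MeromorphicAt g x) (h : f =ᶠ[𝓝[≠] x] g) : meromorphicOrderAt f x = meromorphicOrderAt g x := by
  rcases eq_or_ne (meromorphicOrderAt g x) ⊤ with ht | ht
  · rw [ht, meromorphicOrderAt_eq_top_iff]
    rw [meromorphicOrderAt_eq_top_iff] at ht
    filter_upwards [h, ht] with z h1 h2
    rw [h1, h2]
  · obtain ⟨n, hn⟩ := WithTop.ne_top_iff_exists.mp ht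
    rw [← hn]
    obtain ⟨G, hG, hGne, hGeq⟩ := (meromorphicOrderAt_eq_int_iff hg).mp hn.symm
    rw [meromorphicOrderAt_eq_int_iff hf]
    exact ⟨G, hG, hGne, by filter_upwards [h, hGeq] with z h1 h2; rw [h1, h2]⟩

/-- A function analytic at `0` has a local primitive near `0`. -/
lemma riccati_aux_exists_primitive {g : ℂ → ℂ} (hg : AnalyticAt ℂ g 0) :
    ∃ F : ℂ → ℂ, AnalyticAt ℂ F 0 ∧ ∀ᶠ z in 𝓝 (0 : ℂ), HasDerivAt F (g z) z := by
  obtain ⟨p, hp⟩ := hg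
  obtain ⟨R, hR⟩ := hp
  obtain ⟨r, hr0, hrR⟩ := ENNReal.lt_iff_exists_nnreal_btwn.mp hR.r_pos
  have hrpos : (0 : ℝ) < r := by exact_mod_cast hr0
  set a : ℕ → ℂ := fun n => p.coeff n with ha
  set f : ℕ → ℂ → ℂ := fun n z => a n / (n + 1) * z ^ (n + 1) with hf
  set f' : ℕ → ℂ → ℂ := fun n z => a n * z ^ n with hf'
  set u : ℕ → ℝ := fun n => ‖a n‖ * (r : ℝ) ^ n with hu
  have husum : Summable u := by
    have := p.summable_norm_mul_pow (lt_of_lt_of_le hrR hR.r_le)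
    simpa [hu, ha, FormalMultilinearSeries.norm_apply_eq_norm_coef] using this
  set t : Set ℂ := Metric.ball (0 : ℂ) r with htdef
  have htopen : IsOpen t := Metric.isOpen_ball
  have htconn : IsPreconnected t := (convex_ball _ _).isPreconnected
  have h0t : (0 : ℂ) ∈ t := Metric.mem_ball_self hrpos
  have hder : ∀ n y, y ∈ t → HasDerivAt (f n) (f' n y) y := by
    intro n y _
    have h1 := (hasDerivAt_pow (n + 1) y).const_mul (a n / ((n : ℂ) + 1))
    have hne : ((n : ℂ) + 1) ≠ 0 := Nat.cast_add_one_ne_zero n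
    refine h1.congr_deriv ?_
    push_cast
    field_simp
    ring
  have hbound : ∀ n y, y ∈ t → ‖f' n y‖ ≤ u n := by
    intro n y hy
    have : ‖y‖ ≤ (r : ℝ) := le_of_lt (by simpa [htdef] using hy)
    calc ‖a n * y ^ n‖ = ‖a n‖ * ‖y‖ ^ n := by rw [norm_mul, norm_pow]
      _ ≤ ‖a n‖ * (r : ℝ) ^ n :=
        mul_le_mul_of_nonneg_left (pow_le_pow_left₀ (norm_nonneg _) this n) (norm_nonneg _)
  have hsum0 : Summable fun n => f n 0 := by
    simpa [hf] using summable_zero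
  have key : ∀ y ∈ t, HasDerivAt (fun z => ∑' n, f n z) (∑' n, f' n y) y :=
    fun y hy => hasDerivAt_tsum_of_isPreconnected husum htopen htconn hder hbound h0t hsum0 hy
  have hsum_eq : ∀ y ∈ t, (∑' n, f' n y) = g y := by
    intro y hy
    have hyE : y ∈ EMetric.ball (0 : ℂ) R := by
      apply EMetric.ball_subset_ball hrR.le
      rw [Metric.emetric_ball_nnreal]
      exact hy
    have := hR.hasSum hyE
    have h2 : HasSum (fun n => f' n y) (g (0 + y)) := by
      have e : (fun n => f' n y) = fun n => p n (fun _ => y) := by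
        funext n
        simp [hf', ha, FormalMultilinearSeries.apply_eq_pow_smul_coeff, smul_eq_mul, mul_comm]
      rw [e]
      exact this
    rw [zero_add] at h2
    exact h2.tsum_eq
  refine ⟨fun z => ∑' n, f n z, ?_, ?_⟩
  · have hdiff : DifferentiableOn ℂ (fun z => ∑' n, f n z) t :=
      fun y hy => ((key y hy).differentiableAt).differentiableWithinAt
    exact hdiff.analyticAt (htopen.mem_nhds h0t)
  · filter_upwards [htopen.mem_nhds h0t] with y hy
    have := key y hy
    rwa [hsum_eq y hy] at this

/-- The equation `r' = s·r` has a solution `r` analytic and non-vanishing at `0`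
if and only if the meromorphic function `s` has nonnegative order at `0`,
i.e. no pole at `0`. -/
theorem riccati_log_deriv_solvable_iff_no_pole (s : ℂ → ℂ) (hs : MeromorphicAt s 0) :
    (∃ r : ℂ → ℂ, AnalyticAt ℂ r 0 ∧ r 0 ≠ 0 ∧
        ∀ᶠ z in nhdsWithin (0 : ℂ) {(0 : ℂ)}ᶜ, deriv r z = s z * r z) ↔
      0 ≤ meromorphicOrderAt s 0 := by
  constructor
  · rintro ⟨r, hr, hr0, heq⟩
    -- s agrees with the analytic function `deriv r / r` near 0
    have hdr : AnalyticAt ℂ (deriv r) 0 := by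
      have hon : AnalyticOnNhd ℂ r {z | AnalyticAt ℂ r z} := fun _ hz => hz
      exact hon.deriv 0 hr
    have hg : AnalyticAt ℂ (fun z => deriv r z / r z) 0 := hdr.div hr hr0
    have hrne : ∀ᶠ z in 𝓝 (0 : ℂ), r z ≠ 0 := hr.continuousAt.eventually_ne hr0
    have hcong : s =ᶠ[𝓝[≠] (0 : ℂ)] fun z => deriv r z / r z := by
      filter_upwards [heq, hrne.filter_mono nhdsWithin_le_nhds] with z h1 h2
      rw [h1, mul_div_assoc, div_self h2, mul_one]
    rw [riccati_aux_order_congr hs hg.meromorphicAt hcong, hg.meromorphicOrderAt_eq]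
    rcases eq_or_ne (analyticOrderAt (fun z => deriv r z / r z) 0) ⊤ with h | h
    · rw [h, ENat.map_top]
      exact le_top
    · obtain ⟨n, hn⟩ := WithTop.ne_top_iff_exists.mp h
      rw [← hn]
      exact WithTop.coe_le_coe.mpr (Int.ofNat_nonneg n)
  · intro hord
    rcases eq_or_ne (meromorphicOrderAt s 0) ⊤ with htop | htop
    · -- s vanishes near 0: take r = 1
      refine ⟨fun _ => 1, analyticAt_const, one_ne_zero, ?_⟩
      filter_upwards [meromorphicOrderAt_eq_top_iff.mp htop] with z hz
      simp [hz, deriv_const]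
    · obtain ⟨n, hn⟩ := WithTop.ne_top_iff_exists.mp htop
      have hn0 : 0 ≤ n := by
        rw [← hn] at hord
        exact_mod_cast hord
      obtain ⟨G, hG, _, hGeq⟩ := (meromorphicOrderAt_eq_int_iff hs).mp hn.symm
      -- h is analytic at 0 and agrees with s on a punctured neighborhood
      set h : ℂ → ℂ := fun z => z ^ n.toNat * G z with hhdef
      have hh : AnalyticAt ℂ h 0 := by
        apply AnalyticAt.mul _ hG
        exact (analyticAt_id.pow _)
      have hcong : ∀ᶠ z in 𝓝[≠] (0 : ℂ), s z = h z := by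
        filter_upwards [hGeq] with z hz
        rw [hz, hhdef]
        simp only [sub_zero, smul_eq_mul]
        rw [← zpow_natCast z n.toNat, Int.toNat_of_nonneg hn0]
      obtain ⟨F, hF, hFder⟩ := riccati_aux_exists_primitive hh
      refine ⟨fun z => Complex.exp (F z), analyticAt_cexp.comp hF,
        Complex.exp_ne_zero _, ?_⟩
      have : ∀ᶠ z in 𝓝 (0 : ℂ), deriv (fun z => Complex.exp (F z)) z
          = h z * Complex.exp (F z) := by
        filter_upwards [hFder] with z hz
        rw [(hz.cexp).deriv]
        ring
      filter_upwards [this.filter_mono nhdsWithin_le_nhds, hcong] with z h1 h2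
      rw [h1, h2]
end

section
/- Let m ≥ 1 be a natural number, a ∈ ℂ, and let r : ℂ → ℂ be meromorphic at 0 and not identically zero on any punctured neighborhood of 0. If z^{m+1} · (deriv r z) = a · r z for all z in some punctured neighborhood of 0, then a = 0. (Equivalently: the function exp(−a/(m z^m)) is not meromorphic at 0 unless a = 0.) -/
open Filter

/-- If `r` is meromorphic at `0`, not eventually zero near `0`, and satisfies
`z^(m+1) r'(z) = a r(z)` on a punctured neighborhood of `0` (with `m ≥ 1`),
then `a = 0`: the function `exp(-a/(m z^m))` is not meromorphic at `0` unless `a = 0`. -/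
theorem pole_order_ge_two_no_meromorphic_solution (m : ℕ) (hm : 1 ≤ m) (a : ℂ)
    (r : ℂ → ℂ) (hr : MeromorphicAt r 0)
    (hr0 : ¬ (∀ᶠ z in nhdsWithin (0 : ℂ) {(0 : ℂ)}ᶜ, r z = 0))
    (heq : ∀ᶠ z in nhdsWithin (0 : ℂ) {(0 : ℂ)}ᶜ, z ^ (m + 1) * deriv r z = a * r z) :
    a = 0 := by
  have hne : meromorphicOrderAt r 0 ≠ ⊤ := fun h => hr0 (meromorphicOrderAt_eq_top_iff.mp h)
  obtain ⟨n, hn⟩ := WithTop.ne_top_iff_exists.mp hne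
  obtain ⟨g, hg, hg0, hrg⟩ := (meromorphicOrderAt_eq_int_iff hr).mp hn.symm
  simp only [sub_zero, smul_eq_mul] at hrg
  set f : ℂ → ℂ := fun z => z ^ n * g z with hf
  -- derivative of f at z ≠ 0 where g is analytic
  have hderiv : ∀ z : ℂ, z ≠ 0 → AnalyticAt ℂ g z →
      HasDerivAt f ((n : ℂ) * z ^ (n - 1) * g z + z ^ n * deriv g z) z := by
    intro z hz hgz
    exact (hasDerivAt_zpow n z (Or.inl hz)).mul hgz.differentiableAt.hasDerivAt
  -- deriv r = deriv f eventually on the punctured neighborhood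
  have hev : ∀ᶠ z in nhdsWithin (0 : ℂ) {(0 : ℂ)}ᶜ,
      deriv r z = (n : ℂ) * z ^ (n - 1) * g z + z ^ n * deriv g z := by
    rw [eventually_nhdsWithin_iff] at hrg ⊢
    obtain ⟨t, htr, hto, h0t⟩ := eventually_nhds_iff.mp (hrg.and hg.eventually_analyticAt)
    rw [eventually_nhds_iff]
    refine ⟨t, fun z hzt hz => ?_, hto, h0t⟩
    have hz' : z ≠ 0 := hz
    have hd := hderiv z hz' (htr z hzt).2
    have : deriv r z = deriv f z := by
      apply Filter.EventuallyEq.deriv_eq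
      filter_upwards [hto.mem_nhds hzt, isOpen_compl_singleton.mem_nhds hz'] with w hw hw'
      exact (htr w hw).1 hw'
    rw [this, hd.deriv]
  -- the key equation after cancelling z^n
  have key : ∀ᶠ z in nhdsWithin (0 : ℂ) {(0 : ℂ)}ᶜ,
      (n : ℂ) * z ^ m * g z + z ^ (m + 1) * deriv g z = a * g z := by
    filter_upwards [heq, hev, hrg, self_mem_nhdsWithin] with z h1 h2 h3 hz
    have hz' : (z : ℂ) ≠ 0 := hz
    rw [h2, h3] at h1
    have hzn : (z : ℂ) ^ n ≠ 0 := zpow_ne_zero n hz'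
    apply mul_left_cancel₀ hzn
    have e1 : (z:ℂ) ^ (m + 1) * z ^ (n - 1) = z ^ n * z ^ (m : ℕ) := by
      rw [← zpow_natCast z (m + 1), ← zpow_natCast z m, ← zpow_add₀ hz', ← zpow_add₀ hz']
      congr 1; push_cast; ring
    linear_combination h1 - ((n : ℂ) * g z) * e1
  -- take limits along the punctured neighborhood
  have hgc : ContinuousAt g 0 := hg.continuousAt
  have hgc' : ContinuousAt (deriv g) 0 := by
    obtain ⟨s, hs, hsa⟩ := hg.eventually_analyticAt.exists_mem
    exact ((AnalyticOnNhd.deriv hsa) 0 (mem_of_mem_nhds hs)).continuousAt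
  have hl1 : Tendsto (fun z : ℂ => (n : ℂ) * z ^ m * g z + z ^ (m + 1) * deriv g z)
      (nhdsWithin (0 : ℂ) {(0 : ℂ)}ᶜ) (nhds 0) := by
    have : ContinuousAt (fun z : ℂ => (n : ℂ) * z ^ m * g z + z ^ (m + 1) * deriv g z) 0 := by
      fun_prop
    have h0 : ((n : ℂ) * (0:ℂ) ^ m * g 0 + (0:ℂ) ^ (m + 1) * deriv g 0) = 0 := by
      rw [zero_pow (by omega), zero_pow (by omega)]; ring
    have ht := this.tendsto.mono_left (nhdsWithin_le_nhds (s := {(0:ℂ)}ᶜ))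
    rwa [h0] at ht
  have hl2 : Tendsto (fun z : ℂ => a * g z) (nhdsWithin (0 : ℂ) {(0 : ℂ)}ᶜ)
      (nhds (a * g 0)) := (hgc.tendsto.mono_left (nhdsWithin_le_nhds (s := {(0:ℂ)}ᶜ))).const_mul a
  have := tendsto_nhds_unique (hl1.congr' key) hl2
  rcases mul_eq_zero.mp this.symm with h | h
  · exact h
  · exact absurd h hg0
end

section
/- For every function φ : ℂ → ℂ analytic at 0, there exists a function s : ℂ → ℂ analytic at 0 and a neighborhood U of 0 such that deriv s z − (s z)²/2 = −(φ z)² for all z ∈ U. (Local analytic solvability of the Riccati-type equation s' − s²/2 = −φ².) -/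
open Finset
open scoped NNReal ENNReal

/-- Coefficients of the power-series solution of `s' - s²/2 = -∑ b n zⁿ`. -/
noncomputable def riccatiCoeff (b : ℕ → ℂ) : ℕ → ℂ
  | 0 => 0
  | n + 1 =>
    ((∑ kl ∈ (antidiagonal n).attach, riccatiCoeff b kl.1.1 * riccatiCoeff b kl.1.2) / 2
      - b n) / (n + 1)
decreasing_by
  · have := Finset.HasAntidiagonal.antidiagonal.fst_le kl.2; omega
  · have := Finset.HasAntidiagonal.antidiagonal.snd_le kl.2; omega

lemma riccatiCoeff_succ (b : ℕ → ℂ) (n : ℕ) :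
    riccatiCoeff b (n + 1) =
      ((∑ kl ∈ antidiagonal n, riccatiCoeff b kl.1 * riccatiCoeff b kl.2) / 2
        - b n) / (n + 1) := by
  rw [riccatiCoeff, ← Finset.sum_attach (antidiagonal n)
    (fun kl => riccatiCoeff b kl.1 * riccatiCoeff b kl.2)]

lemma riccatiCoeff_bound (b : ℕ → ℂ) {C ρ M : ℝ} (hC : 0 ≤ C) (hρ : 0 ≤ ρ)
    (hb : ∀ n, ‖b n‖ ≤ C * ρ ^ n) (hM1 : 1 ≤ M) (hMρ : ρ ≤ M) (hMC : 1 / 2 + C ≤ M) :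
    ∀ n, ‖riccatiCoeff b n‖ ≤ M ^ n := by
  intro n
  induction n using Nat.strong_induction_on with
  | _ n ih =>
    match n with
    | 0 => simp [riccatiCoeff]
    | n + 1 =>
      rw [riccatiCoeff_succ]
      have hM0 : (0:ℝ) < M := lt_of_lt_of_le one_pos hM1
      have hsum : ‖∑ kl ∈ antidiagonal n, riccatiCoeff b kl.1 * riccatiCoeff b kl.2‖
          ≤ (n + 1) * M ^ n := by
        calc ‖∑ kl ∈ antidiagonal n, riccatiCoeff b kl.1 * riccatiCoeff b kl.2‖
            ≤ ∑ kl ∈ antidiagonal n, ‖riccatiCoeff b kl.1 * riccatiCoeff b kl.2‖ :=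
              norm_sum_le _ _
          _ ≤ ∑ kl ∈ antidiagonal n, M ^ n := by
              refine Finset.sum_le_sum fun kl hkl => ?_
              have h1 := ih kl.1 (Nat.lt_succ_of_le (Finset.HasAntidiagonal.antidiagonal.fst_le hkl))
              have h2 := ih kl.2 (Nat.lt_succ_of_le (Finset.HasAntidiagonal.antidiagonal.snd_le hkl))
              rw [norm_mul]
              calc ‖riccatiCoeff b kl.1‖ * ‖riccatiCoeff b kl.2‖
                  ≤ M ^ kl.1 * M ^ kl.2 := by
                    exact mul_le_mul h1 h2 (norm_nonneg _) (pow_nonneg hM0.le _)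
                _ = M ^ n := by
                    rw [← pow_add]
                    congr 1
                    exact Finset.HasAntidiagonal.mem_antidiagonal.mp hkl
          _ = (n + 1) * M ^ n := by
              rw [Finset.sum_const, Finset.Nat.card_antidiagonal]
              push_cast; ring
      have hbn : ‖b n‖ ≤ C * M ^ n :=
        (hb n).trans (by gcongr)
      have hnorm : ‖((n:ℂ) + 1)‖ = (n : ℝ) + 1 := by
        rw [show ((n:ℂ) + 1) = ((n+1 : ℕ) : ℂ) by push_cast; ring,
          Complex.norm_natCast]
        push_cast; ring
      rw [norm_div, hnorm]
      rw [div_le_iff₀ (by positivity)]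
      have : ‖(∑ kl ∈ antidiagonal n, riccatiCoeff b kl.1 * riccatiCoeff b kl.2) / 2 - b n‖
          ≤ (n + 1) * M ^ n / 2 + C * M ^ n := by
        calc _ ≤ ‖(∑ kl ∈ antidiagonal n, riccatiCoeff b kl.1 * riccatiCoeff b kl.2) / 2‖
              + ‖b n‖ := norm_sub_le _ _
          _ ≤ (n + 1) * M ^ n / 2 + C * M ^ n := by
              rw [norm_div]
              simp only [Complex.norm_ofNat]
              gcongr
      refine this.trans ?_
      have hMn : (0:ℝ) ≤ M ^ n := pow_nonneg hM0.le _
      have key : (1 / 2 + C) * M ^ n ≤ M ^ (n + 1) := by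
        rw [pow_succ, mul_comm (M ^ n) M]
        exact mul_le_mul_of_nonneg_right hMC hMn
      have h1 : (1 / 2 + C) * M ^ n * ((n:ℝ) + 1) ≤ M ^ (n + 1) * ((n:ℝ) + 1) :=
        mul_le_mul_of_nonneg_right key (by positivity)
      nlinarith [h1, mul_nonneg (mul_nonneg hC hMn) (Nat.cast_nonneg (α := ℝ) n)]

/-- Local analytic solvability of the Riccati-type equation `s' - s²/2 = -φ²`. -/
theorem riccati_local_analytic_solution (φ : ℂ → ℂ) (hφ : AnalyticAt ℂ φ 0) :
    ∃ s : ℂ → ℂ, AnalyticAt ℂ s 0 ∧ ∃ U ∈ nhds (0 : ℂ),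
      ∀ z ∈ U, deriv s z - (s z) ^ 2 / 2 = -(φ z) ^ 2 := by
  obtain ⟨q, hq⟩ := hφ
  obtain ⟨R, hR0, hRrad⟩ : ∃ R : ℝ≥0, 0 < R ∧ (R : ℝ≥0∞) < q.radius := by
    rcases ENNReal.lt_iff_exists_nnreal_btwn.mp hq.radius_pos with ⟨R, hR1, hR2⟩
    exact ⟨R, by exact_mod_cast hR1, hR2⟩
  obtain ⟨C, hC0, hCb⟩ := q.norm_mul_pow_le_of_lt_radius hRrad
  have hR0' : (0:ℝ) < (R:ℝ) := hR0
  set ρ : ℝ := (R:ℝ)⁻¹ with hρdef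
  have hρ0 : 0 < ρ := by positivity
  have hcoeff : ∀ n, ‖q.coeff n‖ ≤ C * ρ ^ n := by
    intro n
    have h1 : ‖q.coeff n‖ ≤ ‖q n‖ := by
      calc ‖q n fun _ => 1‖ ≤ ‖q n‖ * ∏ _i : Fin n, ‖(1:ℂ)‖ := (q n).le_opNorm _
        _ = ‖q n‖ := by simp
    have hRn : (0:ℝ) < (R:ℝ) ^ n := pow_pos hR0' n
    calc ‖q.coeff n‖ ≤ ‖q n‖ := h1
      _ ≤ C / (R:ℝ) ^ n := by rw [le_div_iff₀ hRn]; exact hCb n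
      _ = C * ρ ^ n := by rw [div_eq_mul_inv, inv_pow]
  set b : ℕ → ℂ := fun n => ∑ kl ∈ antidiagonal n, q.coeff kl.1 * q.coeff kl.2 with hbdef
  have hb : ∀ n, ‖b n‖ ≤ C ^ 2 * (2 * ρ) ^ n := by
    intro n
    have hcard : ((antidiagonal n).card : ℝ) = n + 1 := by
      rw [Finset.Nat.card_antidiagonal]; push_cast; ring
    calc ‖b n‖ ≤ ∑ kl ∈ antidiagonal n, ‖q.coeff kl.1 * q.coeff kl.2‖ := norm_sum_le _ _
      _ ≤ ∑ kl ∈ antidiagonal n, C ^ 2 * ρ ^ n := by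
          refine Finset.sum_le_sum fun kl hkl => ?_
          rw [norm_mul]
          calc ‖q.coeff kl.1‖ * ‖q.coeff kl.2‖ ≤ (C * ρ ^ kl.1) * (C * ρ ^ kl.2) :=
                mul_le_mul (hcoeff _) (hcoeff _) (norm_nonneg _) (by positivity)
            _ = C ^ 2 * ρ ^ n := by
                rw [← Finset.HasAntidiagonal.mem_antidiagonal.mp hkl, pow_add]; ring
      _ = (n + 1) * (C ^ 2 * ρ ^ n) := by rw [Finset.sum_const, nsmul_eq_mul, hcard]
      _ ≤ 2 ^ n * (C ^ 2 * ρ ^ n) := by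
          have h2n : (n:ℝ) + 1 ≤ 2 ^ n := by
            exact_mod_cast Nat.succ_le_of_lt (Nat.lt_two_pow_self)
          exact mul_le_mul_of_nonneg_right h2n (by positivity)
      _ = C ^ 2 * (2 * ρ) ^ n := by rw [mul_pow]; ring
  set M : ℝ := max 1 (max (2 * ρ) (1 / 2 + C ^ 2)) with hMdef
  have hM1 : 1 ≤ M := le_max_left _ _
  have hM0 : 0 < M := lt_of_lt_of_le one_pos hM1
  have hMρ : 2 * ρ ≤ M := le_trans (le_max_left _ _) (le_max_right _ _)
  have hMC : 1 / 2 + C ^ 2 ≤ M := le_trans (le_max_right _ _) (le_max_right _ _)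
  set a : ℕ → ℂ := riccatiCoeff b with hadef
  have ha : ∀ n, ‖a n‖ ≤ M ^ n :=
    riccatiCoeff_bound b (by positivity) (by positivity) hb hM1 hMρ hMC
  set p : FormalMultilinearSeries ℂ ℂ ℂ := FormalMultilinearSeries.ofScalars ℂ a with hpdef
  have hpapp : ∀ (n : ℕ) (z : ℂ), p n (fun _ => z) = a n * z ^ n := by
    intro n z
    rw [hpdef, FormalMultilinearSeries.ofScalars_apply_eq, smul_eq_mul]
  have hler : ((Real.toNNReal M⁻¹ : ℝ≥0) : ℝ≥0∞) ≤ p.radius := by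
    apply p.le_radius_of_bound 1
    intro n
    rw [show ‖p n‖ = ‖a n‖ from FormalMultilinearSeries.ofScalars_norm ℂ a n, Real.coe_toNNReal _ (by positivity)]
    calc ‖a n‖ * (M⁻¹) ^ n ≤ M ^ n * (M⁻¹) ^ n :=
          mul_le_mul_of_nonneg_right (ha n) (by positivity)
      _ = 1 := by rw [← mul_pow, mul_inv_cancel₀ (ne_of_gt hM0), one_pow]
  have hprad : 0 < p.radius := by
    refine lt_of_lt_of_le ?_ hler
    simp only [ENNReal.coe_pos, Real.toNNReal_pos]
    positivity
  set s : ℂ → ℂ := p.sum with hsdef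
  have hps : HasFPowerSeriesOnBall s p 0 p.radius := p.hasFPowerSeriesOnBall hprad
  have hsA : AnalyticAt ℂ s 0 := hps.hasFPowerSeriesAt.analyticAt
  obtain ⟨rq, hrq⟩ := hq
  obtain ⟨rq', hrq'0, hrq'lt⟩ : ∃ rq' : ℝ≥0, 0 < rq' ∧ (rq' : ℝ≥0∞) < rq := by
    rcases ENNReal.lt_iff_exists_nnreal_btwn.mp hrq.r_pos with ⟨t, ht1, ht2⟩
    exact ⟨t, by exact_mod_cast ht1, ht2⟩
  set r1 : ℝ := min (min (M⁻¹ / 2) ((R:ℝ) / 2)) (rq' : ℝ) with hr1def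
  have hr1pos : 0 < r1 := by
    refine lt_min (lt_min (by positivity) (by positivity)) ?_
    exact_mod_cast hrq'0
  -- membership facts
  have hzp : ∀ z : ℂ, ‖z‖ < r1 → (‖z‖₊ : ℝ≥0∞) < p.radius := by
    intro z hz
    refine lt_of_lt_of_le ?_ hler
    rw [ENNReal.coe_lt_coe]
    rw [← NNReal.coe_lt_coe, coe_nnnorm, Real.coe_toNNReal _ (by positivity)]
    calc ‖z‖ < r1 := hz
      _ ≤ M⁻¹ / 2 := le_trans (min_le_left _ _) (min_le_left _ _)
      _ < M⁻¹ := half_lt_self (by positivity)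
  have hzq : ∀ z : ℂ, ‖z‖ < r1 → (‖z‖₊ : ℝ≥0∞) < rq := by
    intro z hz
    refine lt_trans ?_ hrq'lt
    rw [ENNReal.coe_lt_coe, ← NNReal.coe_lt_coe, coe_nnnorm]
    exact lt_of_lt_of_le hz (min_le_right _ _)
  have hzM : ∀ z : ℂ, ‖z‖ < r1 → M * ‖z‖ < 1 := by
    intro z hz
    have h1 : ‖z‖ < M⁻¹ / 2 := lt_of_lt_of_le hz (le_trans (min_le_left _ _) (min_le_left _ _))
    calc M * ‖z‖ < M * (M⁻¹ / 2) := by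
          exact mul_lt_mul_of_pos_left h1 hM0
      _ = 1 / 2 := by field_simp
      _ < 1 := by norm_num
  have hzρ : ∀ z : ℂ, ‖z‖ < r1 → ρ * ‖z‖ < 1 := by
    intro z hz
    have h1 : ‖z‖ < (R:ℝ) / 2 := lt_of_lt_of_le hz (le_trans (min_le_left _ _) (min_le_right _ _))
    calc ρ * ‖z‖ < ρ * ((R:ℝ) / 2) := mul_lt_mul_of_pos_left h1 hρ0
      _ = 1 / 2 := by rw [hρdef]; field_simp
      _ < 1 := by norm_num
  -- main pointwise identity away from 0
  have key : ∀ z : ℂ, ‖z‖ < r1 → z ≠ 0 →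
      deriv s z - (s z) ^ 2 / 2 + (φ z) ^ 2 = 0 := by
    intro z hz hz0
    have hmemp : z ∈ Metric.eball (0:ℂ) p.radius := by
      rw [Metric.mem_eball, edist_zero_right]; exact hzp z hz
    have hmemq : z ∈ Metric.eball (0:ℂ) rq := by
      rw [Metric.mem_eball, edist_zero_right]; exact hzq z hz
    -- sum for s
    have hs_sum : HasSum (fun n => a n * z ^ n) (s z) := by
      have := hps.hasSum hmemp
      rw [zero_add] at this
      convert this using 2 with n
      · rfl
      rw [hpapp]
    -- sum for φ
    have hφ_sum : HasSum (fun n => q.coeff n * z ^ n) (φ z) := by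
      have := hrq.hasSum hmemq
      rw [zero_add] at this
      convert this using 2 with n
      · rfl
      rw [FormalMultilinearSeries.apply_eq_pow_smul_coeff, smul_eq_mul, mul_comm]
    -- summability of norms
    have Sa : Summable fun n => ‖a n * z ^ n‖ := by
      refine Summable.of_nonneg_of_le (fun n => norm_nonneg _) (fun n => ?_)
        (summable_geometric_of_lt_one (by positivity) (hzM z hz))
      rw [norm_mul, norm_pow, mul_pow]
      exact mul_le_mul_of_nonneg_right (ha n) (by positivity)
    have Sq : Summable fun n => ‖q.coeff n * z ^ n‖ := by
      refine Summable.of_nonneg_of_le (fun n => norm_nonneg _) (fun n => ?_)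
        ((summable_geometric_of_lt_one (by positivity) (hzρ z hz)).mul_left C)
      rw [norm_mul, norm_pow]
      calc ‖q.coeff n‖ * ‖z‖ ^ n ≤ (C * ρ ^ n) * ‖z‖ ^ n :=
            mul_le_mul_of_nonneg_right (hcoeff n) (by positivity)
        _ = C * (ρ * ‖z‖) ^ n := by rw [mul_pow]; ring
    -- Cauchy product for s²
    have hcz : HasSum (fun n => (∑ kl ∈ antidiagonal n, a kl.1 * a kl.2) * z ^ n)
        ((s z) ^ 2) := by
      have hmul : (s z) * (s z) =
          ∑' n, ∑ kl ∈ antidiagonal n, (a kl.1 * z ^ kl.1) * (a kl.2 * z ^ kl.2) := by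
        rw [← hs_sum.tsum_eq]
        exact tsum_mul_tsum_eq_tsum_sum_antidiagonal_of_summable_norm Sa Sa
      have Scz : Summable fun n =>
          ∑ kl ∈ antidiagonal n, (a kl.1 * z ^ kl.1) * (a kl.2 * z ^ kl.2) :=
        (summable_norm_sum_mul_antidiagonal_of_summable_norm Sa Sa).of_norm
      have h := Scz.hasSum
      rw [← hmul, ← pow_two] at h
      convert h using 2 with n
      rw [Finset.sum_mul]
      refine Finset.sum_congr rfl fun kl hkl => ?_
      rw [← Finset.HasAntidiagonal.mem_antidiagonal.mp hkl, pow_add]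
      ring
    -- Cauchy product for φ²
    have hbz : HasSum (fun n => b n * z ^ n) ((φ z) ^ 2) := by
      have hmul : (φ z) * (φ z) =
          ∑' n, ∑ kl ∈ antidiagonal n, (q.coeff kl.1 * z ^ kl.1) * (q.coeff kl.2 * z ^ kl.2) := by
        rw [← hφ_sum.tsum_eq]
        exact tsum_mul_tsum_eq_tsum_sum_antidiagonal_of_summable_norm Sq Sq
      have Scz : Summable fun n =>
          ∑ kl ∈ antidiagonal n, (q.coeff kl.1 * z ^ kl.1) * (q.coeff kl.2 * z ^ kl.2) :=
        (summable_norm_sum_mul_antidiagonal_of_summable_norm Sq Sq).of_norm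
      have h := Scz.hasSum
      rw [← hmul, ← pow_two] at h
      convert h using 2 with n
      rw [hbdef, Finset.sum_mul]
      refine Finset.sum_congr rfl fun kl hkl => ?_
      rw [← Finset.HasAntidiagonal.mem_antidiagonal.mp hkl, pow_add]
      ring
    -- sum for the derivative
    have hd_sum : HasSum (fun n : ℕ => ((n:ℂ) + 1) * a (n + 1) * z ^ n) (deriv s z) := by
      have h0 := (hps.fderiv).hasSum hmemp
      rw [zero_add] at h0
      have h1 : HasSum (fun n => p.derivSeries n (fun _ => z) 1) (fderiv ℂ s z 1) :=
        h0.mapL (ContinuousLinearMap.apply ℂ ℂ (1:ℂ))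
      rw [fderiv_apply_one_eq_deriv] at h1
      have hterm : (fun n : ℕ => p.derivSeries n (fun _ => z) 1)
          = fun n : ℕ => ((n:ℂ) + 1) * a (n + 1) * z ^ n := by
        funext n
        have hdiag := p.derivSeries_apply_diag n z
        have hlin : (p.derivSeries n fun _ => z) z
            = z * (p.derivSeries n fun _ => z) 1 := by
          have h := (p.derivSeries n fun _ => z).map_smul z (1:ℂ)
          simpa using h
        have hval : p (n + 1) (fun _ => z) = a (n + 1) * z ^ (n + 1) := hpapp (n + 1) z
        have hzz : z * (p.derivSeries n fun _ => z) 1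
            = z * (((n:ℂ) + 1) * a (n + 1) * z ^ n) := by
          rw [← hlin, hdiag, hval]
          push_cast
          ring
        exact mul_left_cancel₀ hz0 hzz
      rw [hterm] at h1
      exact h1
    -- combine
    have hrec : ∀ n : ℕ, ((n:ℂ) + 1) * a (n + 1)
        = (∑ kl ∈ antidiagonal n, a kl.1 * a kl.2) / 2 - b n := by
      intro n
      rw [hadef, riccatiCoeff_succ]
      have hne : ((n:ℂ) + 1) ≠ 0 := Nat.cast_add_one_ne_zero n
      field_simp
    have hfinal : HasSum (fun _ : ℕ => (0:ℂ))
        (deriv s z - (s z) ^ 2 / 2 + (φ z) ^ 2) := by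
      have h := (hd_sum.sub (hcz.div_const 2)).add hbz
      have heq : (fun _ : ℕ => (0:ℂ)) = fun n : ℕ =>
          ((n:ℂ) + 1) * a (n + 1) * z ^ n
            - (∑ kl ∈ antidiagonal n, a kl.1 * a kl.2) * z ^ n / 2 + b n * z ^ n := by
        funext n
        linear_combination (-(z ^ n)) * hrec n
      exact heq ▸ h
    exact hfinal.unique hasSum_zero
  -- value at 0 by continuity
  set g : ℂ → ℂ := fun z => deriv s z - (s z) ^ 2 / 2 + (φ z) ^ 2 with hgdef
  have hg0 : g 0 = 0 := by
    have h1 : ContinuousAt (deriv s) 0 := by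
      have hfd : AnalyticAt ℂ (fderiv ℂ s) 0 := hsA.fderiv
      have h2 : ContinuousAt (fun z => fderiv ℂ s z 1) 0 :=
        ((ContinuousLinearMap.apply ℂ ℂ (1:ℂ)).continuous.continuousAt).comp
          hfd.continuousAt
      have : deriv s = fun z => fderiv ℂ s z 1 := by
        funext w; exact (fderiv_apply_one_eq_deriv).symm
      rw [this]
      exact h2
    have hφc : ContinuousAt φ 0 := hrq.hasFPowerSeriesAt.continuousAt
    have hcont : ContinuousAt g 0 :=
      ((h1.sub ((hsA.continuousAt.pow 2).div_const 2)).add (hφc.pow 2))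
    have h2 : Filter.Tendsto g (nhdsWithin 0 {(0:ℂ)}ᶜ) (nhds (g 0)) :=
      hcont.tendsto.mono_left nhdsWithin_le_nhds
    have h3 : Filter.Tendsto g (nhdsWithin 0 {(0:ℂ)}ᶜ) (nhds 0) := by
      refine Filter.Tendsto.congr' ?_ tendsto_const_nhds
      filter_upwards [self_mem_nhdsWithin,
        mem_nhdsWithin_of_mem_nhds (Metric.ball_mem_nhds (0:ℂ) hr1pos)] with w hw1 hw2
      exact (key w (mem_ball_zero_iff.mp hw2) hw1).symm
    exact tendsto_nhds_unique h2 h3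
  refine ⟨s, hsA, Metric.ball 0 r1, Metric.ball_mem_nhds _ hr1pos, ?_⟩
  intro z hz
  rcases eq_or_ne z 0 with rfl | hz0
  · have := hg0
    rw [hgdef] at this
    simp only at this
    linear_combination this
  · have := key z (mem_ball_zero_iff.mp hz) hz0
    linear_combination this
end
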